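/- Define ξ(b) to be the smallest eigenvalue of W(b). If b ∈ ℝ^n is a unit vector with at least one zero entry, then ξ(b) = 0, while ξ(b) > 0 for every unit vector b with all entries nonzero. Consequently, any unit vector b* that maximizes ξ over the unit sphere of ℝ^n has all entries nonzero. -/

import Mathlib

open Matrix BigOperators Real MeasureTheory Set Filter Topology

/-- The Cauchy matrix with entries `1/(λᵢ + λⱼ)`. -/
noncomputable def cauchyPsi (n : ℕ) (lam : Fin n → ℝ) : Matrix (Fin n) (Fin n) ℝ :=
  Matrix.of fun i j => 1 / (lam i + lam j)

/-- `W(b) = diag(b) Ψ diag(b)`. -/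
noncomputable def cauchyW (n : ℕ) (lam : Fin n → ℝ) (b : Fin n → ℝ) :
    Matrix (Fin n) (Fin n) ℝ :=
  Matrix.diagonal b * cauchyPsi n lam * Matrix.diagonal b

/-- `ξ(b)` : the smallest eigenvalue of `W(b)`. -/
noncomputable def xi (n : ℕ) (lam : Fin n → ℝ) (b : Fin n → ℝ) : ℝ :=
  sInf (spectrum ℝ (cauchyW n lam b))

lemma integral_exp_neg_mul_Ioi_zero {c : ℝ} (hc : 0 < c) :
    ∫ t in Ioi (0:ℝ), Real.exp (-c * t) = 1 / c := by
  have hderiv : ∀ x ∈ Ici (0:ℝ),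
      HasDerivAt (fun t => -Real.exp (-c * t) / c) (Real.exp (-c * x)) x := by
    intro x _
    have h := (((hasDerivAt_id x).const_mul (-c)).exp).neg.div_const c
    convert h using 1
    · rfl
    · rfl
    · rfl
    · simp only [id]
      field_simp
  have htend : Tendsto (fun t => -Real.exp (-c * t) / c) atTop (𝓝 0) := by
    have : Tendsto (fun t : ℝ => -Real.exp (-c * t) / c) atTop (𝓝 (-0 / c)) :=
      (Tendsto.neg (tendsto_exp_atBot.comp
        (tendsto_id.const_mul_atTop_of_neg (neg_neg_iff_pos.2 hc)))).div_const c
    simpa using this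
  have := integral_Ioi_of_hasDerivAt_of_tendsto' hderiv (exp_neg_integrableOn_Ioi 0 hc) htend
  rw [this]
  norm_num
  rw [neg_div, neg_neg, one_div]

variable {n : ℕ} {lam : Fin n → ℝ}

lemma quad_integral (hpos : ∀ i, 0 < lam i) (x : Fin n → ℝ) :
    x ⬝ᵥ (cauchyPsi n lam *ᵥ x)
      = ∫ t in Ioi (0:ℝ), (∑ i, x i * Real.exp (-lam i * t)) ^ 2 := by
  have hfun : ∀ t : ℝ, (∑ i, x i * Real.exp (-lam i * t)) ^ 2
      = ∑ i, ∑ j, (x i * x j) * Real.exp (-(lam i + lam j) * t) := by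
    intro t
    rw [sq, Finset.sum_mul_sum]
    refine Finset.sum_congr rfl fun i _ => Finset.sum_congr rfl fun j _ => ?_
    rw [show -(lam i + lam j) * t = -lam i * t + -lam j * t by ring, Real.exp_add]
    ring
  have hint : ∀ i j : Fin n, IntegrableOn
      (fun t => (x i * x j) * Real.exp (-(lam i + lam j) * t)) (Ioi (0:ℝ)) := by
    intro i j
    exact (exp_neg_integrableOn_Ioi 0 (by have := hpos i; have := hpos j; linarith)).const_mul _
  simp_rw [hfun]
  rw [integral_finset_sum _ (fun i _ => integrable_finset_sum _ (fun j _ => hint i j))]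
  have : ∀ i : Fin n,
      ∫ t in Ioi (0:ℝ), ∑ j, (x i * x j) * Real.exp (-(lam i + lam j) * t)
        = ∑ j, (x i * x j) * (1 / (lam i + lam j)) := by
    intro i
    rw [integral_finset_sum _ (fun j _ => hint i j)]
    refine Finset.sum_congr rfl fun j _ => ?_
    rw [MeasureTheory.integral_const_mul,
      integral_exp_neg_mul_Ioi_zero (by have := hpos i; have := hpos j; linarith)]
  simp_rw [this]
  simp only [dotProduct, mulVec, cauchyPsi, Matrix.of_apply, dotProduct, Finset.mul_sum]
  refine Finset.sum_congr rfl fun i _ => Finset.sum_congr rfl fun j _ => ?_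
  ring

lemma psi_quad_nonneg (hpos : ∀ i, 0 < lam i) (x : Fin n → ℝ) :
    0 ≤ x ⬝ᵥ (cauchyPsi n lam *ᵥ x) := by
  rw [quad_integral hpos]
  exact integral_nonneg fun t => sq_nonneg _

lemma exp_sum_eq_zero (hmono : StrictMono lam) (x : Fin n → ℝ)
    (h : ∀ t ∈ Ioi (0:ℝ), ∑ i, x i * Real.exp (-lam i * t) = 0) : x = 0 := by
  suffices H : ∀ m : ℕ, ∀ k : Fin n, (k : ℕ) = m → x k = 0 by
    funext k; exact H k k rfl
  intro m
  induction m using Nat.strong_induction_on with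
  | _ m ih =>
    intro k hk
    have hzero : ∀ j : Fin n, j < k → x j = 0 := fun j hj =>
      ih j (hk ▸ (Fin.lt_def.mp hj)) j rfl
    have h1 : Tendsto (fun t : ℝ => ∑ i, x i * Real.exp ((lam k - lam i) * t))
        atTop (𝓝 (x k)) := by
      have hxk : (x k) = ∑ i, (if i = k then x k else 0) := by simp
      rw [hxk]
      refine tendsto_finset_sum _ fun i _ => ?_
      rcases lt_trichotomy i k with hik | rfl | hik
      · have : x i = 0 := hzero i hik
        simp only [this, zero_mul, if_neg (ne_of_lt hik)]
        exact tendsto_const_nhds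
      · simp only [sub_self, zero_mul, Real.exp_zero, mul_one, if_pos rfl]
        exact tendsto_const_nhds
      · have hneg : lam k - lam i < 0 := sub_neg.2 (hmono hik)
        have ht : Tendsto (fun t : ℝ => Real.exp ((lam k - lam i) * t)) atTop (𝓝 0) :=
          tendsto_exp_atBot.comp (tendsto_id.const_mul_atTop_of_neg hneg)
        have := ht.const_mul (x i)
        simpa [if_neg (ne_of_gt hik)] using this
    have h2 : Tendsto (fun t : ℝ => ∑ i, x i * Real.exp ((lam k - lam i) * t))
        atTop (𝓝 0) := by
      have hev : ∀ t ∈ Ioi (0:ℝ),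
          ∑ i, x i * Real.exp ((lam k - lam i) * t) = 0 := by
        intro t ht
        calc ∑ i, x i * Real.exp ((lam k - lam i) * t)
            = Real.exp (lam k * t) * ∑ i, x i * Real.exp (-lam i * t) := by
              rw [Finset.mul_sum]
              refine Finset.sum_congr rfl fun i _ => ?_
              rw [show (lam k - lam i) * t = lam k * t + -lam i * t by ring, Real.exp_add]
              ring
          _ = 0 := by rw [h t ht, mul_zero]
      refine Tendsto.congr' ?_ tendsto_const_nhds
      filter_upwards [Ioi_mem_atTop 0] with t ht using (hev t ht).symm
    exact tendsto_nhds_unique h1 h2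

lemma psi_quad_pos (hpos : ∀ i, 0 < lam i) (hmono : StrictMono lam)
    {x : Fin n → ℝ} (hx : x ≠ 0) : 0 < x ⬝ᵥ (cauchyPsi n lam *ᵥ x) := by
  rcases (psi_quad_nonneg hpos x).lt_or_eq with h | h
  · exact h
  exfalso
  apply hx
  apply exp_sum_eq_zero hmono
  intro t ht
  -- the integrand is continuous, nonneg, with zero integral
  set f : ℝ → ℝ := fun t => ∑ i, x i * Real.exp (-lam i * t) with hf
  have hcont : Continuous f := by
    apply continuous_finset_sum
    intro i _
    exact continuous_const.mul (Real.continuous_exp.comp ((continuous_const.mul continuous_id)))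
  have hint : IntegrableOn (fun t => f t ^ 2) (Ioi (0:ℝ)) := by
    have hfun : (fun t => f t ^ 2)
        = fun t => ∑ i, ∑ j, (x i * x j) * Real.exp (-(lam i + lam j) * t) := by
      funext t
      rw [hf]
      rw [sq, Finset.sum_mul_sum]
      refine Finset.sum_congr rfl fun i _ => Finset.sum_congr rfl fun j _ => ?_
      rw [show -(lam i + lam j) * t = -lam i * t + -lam j * t by ring, Real.exp_add]
      ring
    rw [hfun]
    exact integrable_finset_sum _ (fun i _ => integrable_finset_sum _ (fun j _ =>
      (exp_neg_integrableOn_Ioi 0 (by have := hpos i; have := hpos j; linarith)).const_mul _))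
  have hzero : ∫ t in Ioi (0:ℝ), f t ^ 2 = 0 := by
    rw [← quad_integral hpos x] at *
    exact h.symm
  have hae : (fun t => f t ^ 2) =ᵐ[volume.restrict (Ioi (0:ℝ))] 0 :=
    (integral_eq_zero_iff_of_nonneg_ae (Eventually.of_forall fun t => sq_nonneg _) hint).1 hzero
  have heq : EqOn (fun t => f t ^ 2) 0 (Ioi (0:ℝ)) := by
    refine Measure.eqOn_of_ae_eq hae ((hcont.pow 2).continuousOn) continuousOn_const ?_
    rw [interior_Ioi]
    exact subset_closure
  show f t = 0
  exact sq_eq_zero_iff.mp (heq ht)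

lemma quadW_eq (b x : Fin n → ℝ) :
    x ⬝ᵥ (cauchyW n lam b *ᵥ x)
      = (fun i => b i * x i) ⬝ᵥ (cauchyPsi n lam *ᵥ fun i => b i * x i) := by
  have hD : Matrix.diagonal b *ᵥ x = fun i => b i * x i := by
    funext i; rw [mulVec_diagonal]
  have hD' : x ᵥ* Matrix.diagonal b = fun i => b i * x i := by
    funext i; rw [vecMul_diagonal, mul_comm]
  rw [cauchyW, ← mulVec_mulVec, ← mulVec_mulVec, dotProduct_mulVec, hD, hD']

lemma W_isHermitian (b : Fin n → ℝ) : (cauchyW n lam b).IsHermitian := by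
  have hpsi : (cauchyPsi n lam).IsHermitian := by
    ext i j
    simp only [conjTranspose_apply, cauchyPsi, Matrix.of_apply, star_trivial]
    rw [add_comm]
  unfold Matrix.IsHermitian
  rw [cauchyW, conjTranspose_mul, conjTranspose_mul, diagonal_conjTranspose, hpsi.eq]
  have : star b = b := star_trivial b
  rw [this, Matrix.mul_assoc]

lemma eigen_of_mem_spectrum {W : Matrix (Fin n) (Fin n) ℝ} {μ : ℝ}
    (h : μ ∈ spectrum ℝ W) : ∃ v : Fin n → ℝ, v ≠ 0 ∧ W *ᵥ v = μ • v := by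
  rw [spectrum.mem_iff, Matrix.isUnit_iff_isUnit_det, isUnit_iff_ne_zero, not_ne_iff] at h
  obtain ⟨v, hv, hv0⟩ := Matrix.exists_mulVec_eq_zero_iff.2 h
  refine ⟨v, hv, ?_⟩
  rw [Algebra.algebraMap_eq_smul_one, Matrix.sub_mulVec, smul_mulVec,
    one_mulVec, sub_eq_zero] at hv0
  exact hv0.symm

lemma spectrum_nonneg (hpos : ∀ i, 0 < lam i) (b : Fin n → ℝ) {μ : ℝ}
    (h : μ ∈ spectrum ℝ (cauchyW n lam b)) : 0 ≤ μ := by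
  obtain ⟨v, hv, hv0⟩ := eigen_of_mem_spectrum h
  have h1 : v ⬝ᵥ (cauchyW n lam b *ᵥ v) = μ * (v ⬝ᵥ v) := by
    rw [hv0, dotProduct_smul]; rfl
  have h2 : 0 ≤ v ⬝ᵥ (cauchyW n lam b *ᵥ v) := by
    rw [quadW_eq]; exact psi_quad_nonneg hpos _
  have h3 : 0 < v ⬝ᵥ v := by
    rcases lt_or_eq_of_le (Finset.sum_nonneg fun i _ => mul_self_nonneg (v i) :
        (0:ℝ) ≤ v ⬝ᵥ v) with h4 | h4
    · exact h4
    · exact absurd (dotProduct_self_eq_zero.1 h4.symm) hv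
  nlinarith [h1, h2, h3]

lemma spectrum_pos (hpos : ∀ i, 0 < lam i) (hmono : StrictMono lam)
    {b : Fin n → ℝ} (hb : ∀ i, b i ≠ 0) {μ : ℝ}
    (h : μ ∈ spectrum ℝ (cauchyW n lam b)) : 0 < μ := by
  obtain ⟨v, hv, hv0⟩ := eigen_of_mem_spectrum h
  have h1 : v ⬝ᵥ (cauchyW n lam b *ᵥ v) = μ * (v ⬝ᵥ v) := by
    rw [hv0, dotProduct_smul]; rfl
  have hbv : (fun i => b i * v i) ≠ 0 := by
    intro hc
    apply hv
    funext i
    have := congrFun hc i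
    simp only [Pi.zero_apply] at this ⊢
    exact (mul_eq_zero.1 this).resolve_left (hb i)
  have h2 : 0 < v ⬝ᵥ (cauchyW n lam b *ᵥ v) := by
    rw [quadW_eq]; exact psi_quad_pos hpos hmono hbv
  have h3 : 0 < v ⬝ᵥ v := by
    rcases lt_or_eq_of_le (Finset.sum_nonneg fun i _ => mul_self_nonneg (v i) :
        (0:ℝ) ≤ v ⬝ᵥ v) with h4 | h4
    · exact h4
    · exact absurd (dotProduct_self_eq_zero.1 h4.symm) hv
  nlinarith [h1, h2, h3]

lemma spectrum_nonempty (hn : 0 < n) (b : Fin n → ℝ) :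
    (spectrum ℝ (cauchyW n lam b)).Nonempty :=
  ⟨(W_isHermitian b).eigenvalues ⟨0, hn⟩,
    (W_isHermitian b).eigenvalues_mem_spectrum_real ⟨0, hn⟩⟩

/-- `ξ` vanishes at unit vectors with a zero entry, is positive at unit vectors with
no zero entry; hence any maximizer of `ξ` over the unit sphere has no zero entry. -/
theorem xi_zero_pos_maximizer (n : ℕ) (hn : 0 < n) (lam : Fin n → ℝ)
    (hpos : ∀ i, 0 < lam i) (hmono : StrictMono lam) :
    (∀ b : Fin n → ℝ, ∑ i, b i ^ 2 = 1 → (∃ i, b i = 0) → xi n lam b = 0) ∧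
    (∀ b : Fin n → ℝ, ∑ i, b i ^ 2 = 1 → (∀ i, b i ≠ 0) → 0 < xi n lam b) ∧
    ∀ bstar : Fin n → ℝ, ∑ i, bstar i ^ 2 = 1 →
      (∀ b : Fin n → ℝ, ∑ i, b i ^ 2 = 1 → xi n lam b ≤ xi n lam bstar) →
      ∀ i, bstar i ≠ 0 := by
  have key1 : ∀ b : Fin n → ℝ, (∃ i, b i = 0) → xi n lam b = 0 := by
    intro b ⟨i0, hi0⟩
    have hdet : (cauchyW n lam b).det = 0 := by
      rw [cauchyW, Matrix.det_mul, Matrix.det_mul, Matrix.det_diagonal]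
      rw [Finset.prod_eq_zero (Finset.mem_univ i0) hi0]
      ring
    have h0 : (0:ℝ) ∈ spectrum ℝ (cauchyW n lam b) := by
      rw [spectrum.zero_mem_iff, Matrix.isUnit_iff_isUnit_det, isUnit_iff_ne_zero, not_ne_iff]
      exact hdet
    have hbdd : BddBelow (spectrum ℝ (cauchyW n lam b)) :=
      ⟨0, fun μ hμ => spectrum_nonneg hpos b hμ⟩
    refine le_antisymm (csInf_le hbdd h0) (le_csInf ⟨0, h0⟩ fun μ hμ => spectrum_nonneg hpos b hμ)
  have key2 : ∀ b : Fin n → ℝ, (∀ i, b i ≠ 0) → 0 < xi n lam b := by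
    intro b hb
    have hfin : (spectrum ℝ (cauchyW n lam b)).Finite := Matrix.finite_spectrum _
    have hmem := (spectrum_nonempty hn b).csInf_mem hfin
    exact spectrum_pos hpos hmono hb hmem
  refine ⟨fun b _ => key1 b, fun b _ => key2 b, ?_⟩
  intro bstar hsum hmax i
  intro hzero
  have hx0 : xi n lam bstar = 0 := key1 bstar ⟨i, hzero⟩
  set c : Fin n → ℝ := fun _ => (Real.sqrt n)⁻¹ with hc
  have hcsum : ∑ j, c j ^ 2 = 1 := by
    simp only [hc, Finset.sum_const, Finset.card_univ, Fintype.card_fin, nsmul_eq_mul]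
    rw [inv_pow, Real.sq_sqrt (by positivity : (0:ℝ) ≤ (n:ℝ))]
    field_simp
  have hcpos : 0 < xi n lam c := key2 c fun j => by
    simp only [hc]
    positivity
  have := hmax c hcsum
  rw [hx0] at this
  linarith
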